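/- Let (X, Y, λ, q, α) be a Wall pairing of rank g and let v = ((v_1,0),…,(v_i,0)) where (v_1,…,v_i) extends to a configuration ((v_1,w_1),…,(v_i,w_i)) with λ(v_l,w_m)=δ_{lm}, q(w_l,w_m)=0, α(w_l)=0. Set V = span(v_1,…,v_i), W = span(w_1,…,w_i), W^⊥ = {x ∈ X : λ(x,w)=0 ∀w ∈ W}, V^⊥ = {y ∈ Y : λ(v,y)=0 ∀v ∈ V}, Ŵ = {y ∈ Y : q(y,w)=0 ∀w ∈ W}. Then there is an order-isomorphism of posets L(X,Y) ∩ M(X,Y)_v ≅ L(W^⊥, V^⊥ ∩ Ŵ)⟨V × ρ(V)⟩, given by writing each x_j = a_j + b_j with a_j ∈ W^⊥, b_j ∈ V, and each y_j = c_j + e_j with c_j ∈ V^⊥ ∩ Ŵ, e_j ∈ ρ(V), and sending ((x_1,y_1),…,(x_k,y_k)) to (((a_1,c_1),(b_1,e_1)),…,((a_k,c_k),(b_k,e_k))). -/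

import Mathlib

/-- A Wall pairing of rank `g`.  `X` is a free `ℤ`-module of rank `g` (with chosen
basis `bX`), `Y ≅ ℤ^g ⊕ (ℤ/2)^g` via `eY` (the images of the standard generators are the
`y_i = eY (Pi.single i 1, 0)` and `z_i = eY (0, Pi.single i 1)`, the latter forming a basis of the
torsion subgroup), `lam` is the bilinear pairing, `qf` the symmetric bilinear form, and `alpha`
a quadratic-type refinement valued in an abelian group `A` with homomorphism `bd : ℤ/2 → A`. -/
structure WallPairing (g : ℕ) (X Y A : Type) [AddCommGroup X] [AddCommGroup Y]
    [AddCommGroup A] where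
  lam : X →+ Y →+ ℤ
  qf : Y →+ Y →+ ZMod 2
  qf_symm : ∀ a b : Y, qf a b = qf b a
  bd : ZMod 2 →+ A
  alpha : Y → A
  alpha_add : ∀ a b : Y, alpha (a + b) = alpha a + alpha b + bd (qf a b)
  bX : Module.Basis (Fin g) ℤ X
  eY : ((Fin g → ℤ) × (Fin g → ZMod 2)) ≃+ Y
  lam_xy : ∀ i j, lam (bX i) (eY (Pi.single j 1, 0)) = if i = j then 1 else 0
  lam_xz : ∀ i j, lam (bX i) (eY (0, Pi.single j 1)) = 0
  q_yz : ∀ i j, qf (eY (Pi.single i 1, 0)) (eY (0, Pi.single j 1)) = if i = j then 1 else 0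
  q_yy : ∀ i j, qf (eY (Pi.single i 1, 0)) (eY (Pi.single j 1, 0)) = 0
  q_zz : ∀ i j, qf (eY (0, Pi.single i 1)) (eY (0, Pi.single j 1)) = 0
  alpha_y : ∀ i, alpha (eY (Pi.single i 1, 0)) = 0
  alpha_z : ∀ i, alpha (eY (0, Pi.single i 1)) = 0
/-- The subgroup of `X` of elements `x` with `λ(x, w) = 0` for all `w ∈ S` (denoted `S^⊥`). -/
def lamPerpX {X Y : Type} [AddCommGroup X] [AddCommGroup Y] (lam : X →+ Y →+ ℤ)
    (S : AddSubgroup Y) : AddSubgroup X where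
  carrier := {x : X | ∀ w ∈ S, lam x w = 0}
  zero_mem' := by intro w hw; simp
  add_mem' := by intro a b ha hb w hw; simp [ha w hw, hb w hw]
  neg_mem' := by intro a ha w hw; simp [ha w hw]

/-- The subgroup of `Y` of elements `y` with `λ(v, y) = 0` for all `v ∈ S` (denoted `S^⊥`). -/
def lamPerpY {X Y : Type} [AddCommGroup X] [AddCommGroup Y] (lam : X →+ Y →+ ℤ)
    (S : AddSubgroup X) : AddSubgroup Y where
  carrier := {y : Y | ∀ v ∈ S, lam v y = 0}
  zero_mem' := by intro v hv; simp
  add_mem' := by intro a b ha hb v hv; simp [ha v hv, hb v hv]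
  neg_mem' := by intro a ha v hv; simp [ha v hv]

/-- The subgroup of `Y` of elements `y` with `q(y, w) = 0` for all `w ∈ S` (denoted `Ŝ`). -/
def qPerp {Y : Type} [AddCommGroup Y] (q : Y →+ Y →+ ZMod 2) (S : AddSubgroup Y) :
    AddSubgroup Y where
  carrier := {y : Y | ∀ w ∈ S, q y w = 0}
  zero_mem' := by intro w hw; simp
  add_mem' := by intro a b ha hb w hw; simp [ha w hw, hb w hw]
  neg_mem' := by intro a ha w hw; simp [ha w hw]

/-- Lists with a property, partially ordered by the (ordered) sublist relation.  Taking the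
property to be membership in a set of nonempty duplicate-free sequences, this realizes the
sub-posets of `𝒪(-)` considered in the paper. -/
def ListPoset {T : Type} (P : List T → Prop) : Type := {l : List T // P l}

instance {T : Type} (P : List T → Prop) : PartialOrder (ListPoset P) where
  le a b := a.val.Sublist b.val
  le_refl a := List.Sublist.refl _
  le_trans a b c hab hbc := List.Sublist.trans hab hbc
  le_antisymm a b hab hba := Subtype.ext (List.Sublist.antisymm hab hba)

section
variable {g : ℕ} {X Y A : Type} [AddCommGroup X] [AddCommGroup Y] [AddCommGroup A]

/-- Membership in the poset `L(X,Y)`. -/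
def LMem (W : WallPairing g X Y A) (l : List (X × Y)) : Prop :=
  l ≠ [] ∧ l.Nodup ∧
  (∀ i j : Fin l.length, W.lam (l.get i).1 (l.get j).2 = if i = j then 1 else 0) ∧
  (∀ i j : Fin l.length, W.qf (l.get i).2 (l.get j).2 = 0) ∧
  (∀ i : Fin l.length, W.alpha (l.get i).2 = 0)

/-- Membership in the poset `M(X,Y)`. -/
def MMem (W : WallPairing g X Y A) (l : List (X × Y)) : Prop :=
  l ≠ [] ∧ l.Nodup ∧
  LinearIndependent ℤ (fun i : Fin l.length => (l.get i).1) ∧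
  (∃ C : Submodule ℤ X,
    IsCompl (Submodule.span ℤ (Set.range fun i : Fin l.length => (l.get i).1)) C) ∧
  (∀ i : Fin l.length, W.alpha (l.get i).2 = 0) ∧
  (∀ i : Fin l.length, (l.get i).2 = 0 ∨
    ∀ j : Fin l.length, W.lam (l.get j).1 (l.get i).2 = if j = i then 1 else 0) ∧
  (∀ i j : Fin l.length, W.qf (l.get i).2 (l.get j).2 = 0)

/-- Membership in `L(W^⊥, V^⊥ ∩ Ŵ)⟨V × ρ(V)⟩`: a nonempty duplicate-free list of entries
`((a,c),(b,e))` whose first components `(a,c)` form an element of `L(W^⊥, V^⊥ ∩ Ŵ)`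
(with respect to the restricted structure maps, i.e. the global ones) and whose second
components are labels `(b,e) ∈ V × ρ(V)`.  Here `SX = W^⊥`, `SY = V^⊥ ∩ Ŵ`, `SV = V`,
`SR = ρ(V)`. -/
def LBracketMem (W : WallPairing g X Y A) (SX : AddSubgroup X) (SY : AddSubgroup Y)
    (SV : AddSubgroup X) (SR : AddSubgroup Y) (l : List ((X × Y) × (X × Y))) : Prop :=
  l ≠ [] ∧ l.Nodup ∧ (l.map Prod.fst).Nodup ∧
  (∀ j : Fin l.length, (l.get j).1.1 ∈ SX ∧ (l.get j).1.2 ∈ SY ∧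
    (l.get j).2.1 ∈ SV ∧ (l.get j).2.2 ∈ SR) ∧
  (∀ j k : Fin l.length, W.lam (l.get j).1.1 (l.get k).1.2 = if j = k then 1 else 0) ∧
  (∀ j k : Fin l.length, W.qf (l.get j).1.2 (l.get k).1.2 = 0) ∧
  (∀ j : Fin l.length, W.alpha (l.get j).1.2 = 0)


section Helpers
variable {g : ℕ} {X Y A : Type} [AddCommGroup X] [AddCommGroup Y] [AddCommGroup A]
variable (W : WallPairing g X Y A)

lemma WP_alpha_zero : W.alpha 0 = 0 := by
  have h := W.alpha_add 0 0
  simp at h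
  exact h

lemma WP_form_of_nsmul {t : Y} {n : ℕ} (hn : 0 < n) (h : n • t = 0) :
    ∃ z, t = W.eY (0, z) := by
  have h1 : n • (W.eY.symm t) = 0 := by rw [← map_nsmul, h, map_zero]
  have hfst : (W.eY.symm t).1 = 0 := by
    funext j
    have := congrArg (fun p => p.1 j) h1
    simp [Prod.smul_fst] at this
    rcases this with h' | h'
    · omega
    · exact h'
  refine ⟨(W.eY.symm t).2, ?_⟩
  conv_lhs => rw [← W.eY.apply_symm_apply t]
  congr 1
  rw [← hfst]

lemma WP_smul2_form (z : Fin g → ZMod 2) : 2 • (W.eY (0, z)) = 0 := by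
  rw [← map_nsmul]
  have h2 : (2 : ℕ) • ((0 : Fin g → ℤ), z) = 0 := by
    rw [two_nsmul]
    ext j
    · simp
    · exact CharTwo.add_self_eq_zero (z j)
  rw [h2, map_zero]

include W in
lemma WP_torsion_two {t : Y} (h : t ∈ AddCommGroup.torsion Y) : 2 • t = 0 := by
  obtain ⟨n, hn, h0⟩ := isOfFinAddOrder_iff_nsmul_eq_zero.mp h
  obtain ⟨z, rfl⟩ := WP_form_of_nsmul W hn h0
  exact WP_smul2_form W z

lemma WP_neg_tor {t : Y} (h : 2 • t = 0) : -t = t := by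
  have h' : t + t = 0 := by rw [two_nsmul] at h; exact h
  exact neg_eq_of_add_eq_zero_left h'

lemma WP_lam_tor (x : X) {t : Y} (h : 2 • t = 0) : W.lam x t = 0 := by
  have : (2 : ℕ) • W.lam x t = 0 := by rw [← map_nsmul, h, map_zero]
  simp [two_nsmul] at this
  omega

lemma WP_eY_decomp (z : Fin g → ZMod 2) :
    W.eY (0, z) = ∑ m, W.eY (0, Pi.single m (z m)) := by
  rw [← map_sum]
  congr 1
  have h1 : ((0 : Fin g → ℤ), z) = ∑ m, ((0 : Fin g → ℤ), Pi.single m (z m)) := by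
    ext j
    · simp [Prod.fst_sum]
    · simp [Prod.snd_sum, Finset.univ_sum_single]
  exact h1

lemma WP_q_single (i j : Fin g) (c c' : ZMod 2) :
    W.qf (W.eY (0, Pi.single i c)) (W.eY (0, Pi.single j c')) = 0 := by
  have hcc : ∀ c : ZMod 2, c = 0 ∨ c = 1 := by decide
  rcases hcc c with rfl | rfl <;> rcases hcc c' with rfl | rfl <;>
    simp [W.q_zz i j, Prod.mk_zero_zero]

lemma WP_q_form (z z' : Fin g → ZMod 2) :
    W.qf (W.eY (0, z)) (W.eY (0, z')) = 0 := by
  rw [WP_eY_decomp W z, WP_eY_decomp W z', map_sum]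
  simp only [AddMonoidHom.finset_sum_apply, map_sum]
  simp [WP_q_single]

lemma WP_q_tor {t t' : Y} (h : 2 • t = 0) (h' : 2 • t' = 0) : W.qf t t' = 0 := by
  obtain ⟨z, rfl⟩ := WP_form_of_nsmul W (by norm_num) h
  obtain ⟨z', rfl⟩ := WP_form_of_nsmul W (by norm_num) h'
  exact WP_q_form W z z'

lemma WP_alpha_single (i : Fin g) (c : ZMod 2) :
    W.alpha (W.eY (0, Pi.single i c)) = 0 := by
  have hcc : ∀ c : ZMod 2, c = 0 ∨ c = 1 := by decide
  rcases hcc c with rfl | rfl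
  · simp [WP_alpha_zero W, Prod.mk_zero_zero]
  · exact W.alpha_z i

lemma WP_alpha_form (z : Fin g → ZMod 2) : W.alpha (W.eY (0, z)) = 0 := by
  have key : ∀ s : Finset (Fin g),
      W.alpha (W.eY (0, ∑ m ∈ s, Pi.single m (z m))) = 0 := by
    intro s
    induction s using Finset.induction with
    | empty => simp [WP_alpha_zero W, Prod.mk_zero_zero]
    | @insert a s ha ih =>
      rw [Finset.sum_insert ha]
      have hsplit : W.eY (0, Pi.single a (z a) + ∑ m ∈ s, Pi.single m (z m))
          = W.eY (0, Pi.single a (z a)) + W.eY (0, ∑ m ∈ s, Pi.single m (z m)) := by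
        rw [← map_add]
        congr 1
      rw [hsplit, W.alpha_add, WP_alpha_single W, ih, WP_q_form W]
      simp
  have := key Finset.univ
  rwa [Finset.univ_sum_single] at this

lemma WP_alpha_tor {t : Y} (h : 2 • t = 0) : W.alpha t = 0 := by
  obtain ⟨z, rfl⟩ := WP_form_of_nsmul W (by norm_num) h
  exact WP_alpha_form W z

lemma WP_val_smul_add (t : Y) (h : 2 • t = 0) (a b : ZMod 2) :
    (a + b).val • t = a.val • t + b.val • t := by
  have hmod : ∀ n : ℕ, (n % 2) • t = n • t := by
    intro n
    conv_rhs => rw [← Nat.div_add_mod n 2]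
    rw [add_nsmul, mul_nsmul, h, smul_zero, zero_add]
  rw [ZMod.val_add, hmod, add_nsmul]

lemma WP_mem_lamPerpX_of (S : Set Y) (x : X) (h : ∀ s ∈ S, W.lam x s = 0) :
    x ∈ lamPerpX W.lam (AddSubgroup.closure S) := by
  intro w' hw'
  have hle : AddSubgroup.closure S ≤ (W.lam x).ker :=
    (AddSubgroup.closure_le _).2 (fun s hs => by simpa [AddMonoidHom.mem_ker] using h s hs)
  exact hle hw'

lemma WP_mem_lamPerpY_of (S : Set X) (y : Y) (h : ∀ s ∈ S, W.lam s y = 0) :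
    y ∈ lamPerpY W.lam (AddSubgroup.closure S) := by
  intro v' hv'
  have hle : AddSubgroup.closure S ≤ (W.lam.flip y).ker :=
    (AddSubgroup.closure_le _).2 (fun s hs => by simpa [AddMonoidHom.mem_ker] using h s hs)
  exact hle hv'

lemma WP_mem_qPerp_of (S : Set Y) (y : Y) (h : ∀ s ∈ S, W.qf y s = 0) :
    y ∈ qPerp W.qf (AddSubgroup.closure S) := by
  intro w' hw'
  have hle : AddSubgroup.closure S ≤ (W.qf y).ker :=
    (AddSubgroup.closure_le _).2 (fun s hs => by simpa [AddMonoidHom.mem_ker] using h s hs)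
  exact hle hw'

end Helpers

section Maps
variable {g : ℕ} {X Y A : Type} [AddCommGroup X] [AddCommGroup Y] [AddCommGroup A]
variable (W : WallPairing g X Y A) (ρ : X →+ AddCommGroup.torsion Y)
variable {i : ℕ} (v : Fin i → X) (w : Fin i → Y)

/-- `x ↦ ∑ λ(x, w_m) v_m`, the `V`-component of `x`. -/
def Bf : X →+ X where
  toFun x := ∑ m, W.lam x (w m) • v m
  map_zero' := by simp
  map_add' a b := by simp [add_smul, Finset.sum_add_distrib]

lemma Bf_apply (x : X) : Bf W v w x = ∑ m, W.lam x (w m) • v m := rfl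

include W in
lemma rho_tor (x : X) : 2 • ((ρ x : Y)) = 0 := WP_torsion_two W (ρ x).2

/-- `y ↦ ∑ q(y, w_m) ρ(v_m)`, the torsion component of `y`. -/
def Ef : Y →+ Y where
  toFun y := ∑ m, (W.qf y (w m)).val • ((ρ (v m) : Y))
  map_zero' := by simp
  map_add' a b := by
    have key : ∀ m : Fin i, ((W.qf (a + b)) (w m)).val • ((ρ (v m) : Y))
        = ((W.qf a) (w m)).val • ((ρ (v m) : Y))
          + ((W.qf b) (w m)).val • ((ρ (v m) : Y)) := by
      intro m
      have h1 : W.qf (a + b) (w m) = W.qf a (w m) + W.qf b (w m) := by simp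
      rw [h1]
      exact WP_val_smul_add _ (rho_tor W ρ (v m)) _ _
    simp only [key, Finset.sum_add_distrib]

lemma Ef_apply (y : Y) :
    Ef W ρ v w y = ∑ m, (W.qf y (w m)).val • ((ρ (v m) : Y)) := rfl

lemma Ef_tor (y : Y) : 2 • Ef W ρ v w y = 0 := by
  rw [Ef_apply, Finset.smul_sum]
  refine Finset.sum_eq_zero fun m _ => ?_
  rw [smul_comm, rho_tor W ρ (v m), smul_zero]

lemma lam_Ef (x : X) (y : Y) : W.lam x (Ef W ρ v w y) = 0 :=
  WP_lam_tor W x (Ef_tor W ρ v w y)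

lemma lam_Bf (x : X) (y' : Y) :
    W.lam (Bf W v w x) y' = ∑ m, W.lam x (w m) * W.lam (v m) y' := by
  rw [Bf_apply, map_sum, AddMonoidHom.finset_sum_apply]
  refine Finset.sum_congr rfl fun m _ => ?_
  rw [map_zsmul]
  simp [smul_eq_mul]

lemma q_Ef (hρ : ∀ (x : X) (y : Y), W.qf (ρ x : Y) y = ((W.lam x y : ℤ) : ZMod 2))
    (y u : Y) :
    W.qf (Ef W ρ v w y) u
      = ∑ m, ((W.qf y (w m)).val) • ((W.lam (v m) u : ℤ) : ZMod 2) := by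
  rw [Ef_apply, map_sum, AddMonoidHom.finset_sum_apply]
  refine Finset.sum_congr rfl fun m _ => ?_
  rw [map_nsmul]
  simp [hρ]

lemma q_Ef_of (hρ : ∀ (x : X) (y : Y), W.qf (ρ x : Y) y = ((W.lam x y : ℤ) : ZMod 2))
    (y u : Y) (h : ∀ m, W.lam (v m) u = 0) : W.qf (Ef W ρ v w y) u = 0 := by
  rw [q_Ef W ρ v w hρ y u]
  refine Finset.sum_eq_zero fun m _ => ?_
  rw [h m]
  simp

lemma Bf_on_perp {x : X}
    (hx : x ∈ lamPerpX W.lam (AddSubgroup.closure (Set.range w))) :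
    Bf W v w x = 0 := by
  rw [Bf_apply]
  refine Finset.sum_eq_zero fun m _ => ?_
  rw [hx (w m) (AddSubgroup.subset_closure (Set.mem_range_self m)), zero_smul]

lemma Bf_on_V (hlam : ∀ l m, W.lam (v l) (w m) = if l = m then 1 else 0)
    {b : X} (hb : b ∈ AddSubgroup.closure (Set.range v)) : Bf W v w b = b := by
  induction hb using AddSubgroup.closure_induction with
  | mem x hx =>
    obtain ⟨l, rfl⟩ := hx
    rw [Bf_apply]
    simp [hlam, ite_smul, Finset.sum_ite_eq]
  | zero => exact map_zero _
  | add x y _ _ hx hy => rw [map_add, hx, hy]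
  | neg x _ hx => rw [map_neg, hx]

lemma Ef_on_perp {c : Y}
    (hc : c ∈ qPerp W.qf (AddSubgroup.closure (Set.range w))) :
    Ef W ρ v w c = 0 := by
  rw [Ef_apply]
  refine Finset.sum_eq_zero fun m _ => ?_
  rw [hc (w m) (AddSubgroup.subset_closure (Set.mem_range_self m))]
  simp

lemma Ef_on_rhoV (hρ : ∀ (x : X) (y : Y), W.qf (ρ x : Y) y = ((W.lam x y : ℤ) : ZMod 2))
    (hlam : ∀ l m, W.lam (v l) (w m) = if l = m then 1 else 0)
    {e' : Y} (he : e' ∈ (AddSubgroup.closure (Set.range v)).map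
      ((AddCommGroup.torsion Y).subtype.comp ρ)) : Ef W ρ v w e' = e' := by
  obtain ⟨u, hu, rfl⟩ := he
  induction hu using AddSubgroup.closure_induction with
  | mem x hx =>
    obtain ⟨l, rfl⟩ := hx
    simp only [AddMonoidHom.comp_apply, AddSubgroup.coe_subtype]
    rw [Ef_apply]
    have hval : ∀ m, (W.qf ((ρ (v l) : Y)) (w m)).val = if l = m then 1 else 0 := by
      intro m
      rw [hρ, hlam]
      split <;> simp [ZMod.val_one]
    refine Eq.trans (Finset.sum_congr rfl fun m _ => by rw [hval m]) ?_
    simp [ite_smul, Finset.sum_ite_eq]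
  | zero => simp
  | add x y hx hy ihx ihy => rw [map_add, map_add, ihx, ihy]
  | neg x hx ihx => rw [map_neg, map_neg, ihx]

end Maps

section Dual
variable {g : ℕ} {X Y A : Type} [AddCommGroup X] [AddCommGroup Y] [AddCommGroup A]
variable (W : WallPairing g X Y A)

lemma WP_lam_sum_smul (N : ℕ) (u : Fin N → X) (r : Fin N → ℤ) (y : Y) :
    W.lam (∑ t, r t • u t) y = ∑ t, r t * W.lam (u t) y := by
  rw [map_sum, AddMonoidHom.finset_sum_apply]
  refine Finset.sum_congr rfl fun t _ => ?_
  rw [map_zsmul]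
  simp [smul_eq_mul]

lemma WP_dual_pair {N : ℕ} (u : Fin N → X) (d : Fin N → Y)
    (hud : ∀ s t, W.lam (u s) (d t) = if s = t then 1 else 0) :
    LinearIndependent ℤ u ∧
      ∃ C : Submodule ℤ X, IsCompl (Submodule.span ℤ (Set.range u)) C := by
  have key : ∀ (r : Fin N → ℤ) (t : Fin N),
      W.lam (∑ s, r s • u s) (d t) = r t := by
    intro r t
    rw [WP_lam_sum_smul]
    rw [Finset.sum_congr rfl (fun s _ => by rw [hud s t])]
    simp [Finset.sum_ite_eq']
  constructor
  · rw [Fintype.linearIndependent_iff]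
    intro r hr t
    have := key r t
    rw [hr, map_zero] at this
    exact this.symm
  · refine ⟨⨅ t, LinearMap.ker ((W.lam.flip (d t)).toIntLinearMap), ?_, ?_⟩
    · rw [Submodule.disjoint_def]
      intro x hx hx'
      obtain ⟨r, rfl⟩ := (Submodule.mem_span_range_iff_exists_fun ℤ).1 hx
      have hz : ∀ t, r t = 0 := by
        intro t
        have hker := (Submodule.mem_iInf _).1 hx' t
        rw [LinearMap.mem_ker] at hker
        have : W.lam (∑ s, r s • u s) (d t) = 0 := hker
        rw [key] at this
        exact this
      simp [hz]
    · rw [codisjoint_iff, eq_top_iff]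
      intro x _
      rw [Submodule.mem_sup]
      refine ⟨∑ t, W.lam x (d t) • u t, ?_, x - ∑ t, W.lam x (d t) • u t, ?_, by abel⟩
      · exact Submodule.sum_mem _ fun t _ =>
          Submodule.smul_mem _ _ (Submodule.subset_span (Set.mem_range_self t))
      · rw [Submodule.mem_iInf]
        intro t
        rw [LinearMap.mem_ker]
        show W.lam (x - ∑ s, W.lam x (d s) • u s) (d t) = 0
        rw [map_sub, AddMonoidHom.sub_apply, key]
        simp
  done

end Dual

section Main
variable {g : ℕ} {X Y A : Type} [AddCommGroup X] [AddCommGroup Y] [AddCommGroup A]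
variable (W : WallPairing g X Y A) (ρ : X →+ AddCommGroup.torsion Y)
variable {i : ℕ} (v : Fin i → X) (w : Fin i → Y)

/-- The entrywise forward map `(x, y) ↦ ((a, c), (b, e))`. -/
def phiF : X × Y → (X × Y) × (X × Y) := fun p =>
  ((p.1 - Bf W v w p.1, p.2 - Ef W ρ v w p.2), (Bf W v w p.1, Ef W ρ v w p.2))

/-- The entrywise backward map `((a, c), (b, e)) ↦ (a + b, c + e)`. -/
def psiF : (X × Y) × (X × Y) → X × Y := fun p => (p.1.1 + p.2.1, p.1.2 + p.2.2)

lemma psiF_phiF (p : X × Y) : psiF (phiF W ρ v w p) = p := by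
  simp [phiF, psiF]

lemma GF_eq (l : List (X × Y)) : (l.map (phiF W ρ v w)).map psiF = l := by
  rw [List.map_map]
  have h : ∀ p ∈ l, (psiF ∘ phiF W ρ v w) p = p := fun p _ => psiF_phiF W ρ v w p
  rw [List.map_congr_left h]
  simp

lemma lam_sum_smul_right (x : X) {N : ℕ} (r : Fin N → ℤ) (d : Fin N → Y) :
    W.lam x (∑ t, r t • d t) = ∑ t, r t * W.lam x (d t) := by
  rw [map_sum]
  refine Finset.sum_congr rfl fun t _ => ?_
  rw [map_zsmul]
  simp [smul_eq_mul]

lemma hvy_of_M (l : List (X × Y))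
    (hM : MMem W (l ++ List.ofFn fun m : Fin i => (v m, (0 : Y)))) :
    ∀ (m : Fin i) (j : Fin l.length), W.lam (v m) ((l.get j).2) = 0 := by
  intro m j
  have hlen : (l ++ List.ofFn fun m : Fin i => (v m, (0 : Y))).length = l.length + i := by
    simp
  have hj : (j : ℕ) < (l ++ List.ofFn fun m : Fin i => (v m, (0 : Y))).length := by
    have := j.isLt; omega
  have hgetj : (l ++ List.ofFn fun m : Fin i => (v m, (0 : Y))).get ⟨j, hj⟩ = l.get j := by
    simp [List.get_eq_getElem, List.getElem_append, j.isLt]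
  rcases hM.2.2.2.2.2.1 ⟨j, hj⟩ with h0 | hall
  · rw [hgetj] at h0
    rw [h0, map_zero]
  · have hm : l.length + (m : ℕ) < (l ++ List.ofFn fun m : Fin i => (v m, (0 : Y))).length := by
      have := m.isLt; omega
    have hgetm : ((l ++ List.ofFn fun m : Fin i => (v m, (0 : Y))).get ⟨l.length + m, hm⟩).1
        = v m := by
      have h1 : (l ++ List.ofFn fun m : Fin i => (v m, (0 : Y))).get ⟨l.length + m, hm⟩
          = (l ++ List.ofFn fun m : Fin i => (v m, (0 : Y)))[l.length + (m : ℕ)]'hm := rfl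
      rw [h1, List.getElem_append, dif_neg (by omega), List.getElem_ofFn]
      show (v ⟨l.length + (m : ℕ) - l.length, by omega⟩, (0:Y)).1 = v m
      have h2 : (⟨l.length + (m : ℕ) - l.length, by omega⟩ : Fin i) = m :=
        Fin.ext (by simp)
      rw [h2]
    have h := hall ⟨l.length + m, hm⟩
    rw [hgetm, hgetj] at h
    rw [h, if_neg]
    intro hcon
    have := congrArg Fin.val hcon
    simp at this
    omega

lemma forward_mem (hρ : ∀ (x : X) (y : Y), W.qf (ρ x : Y) y = ((W.lam x y : ℤ) : ZMod 2))
    (hlam : ∀ l m, W.lam (v l) (w m) = if l = m then 1 else 0)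
    (l : List (X × Y))
    (h : LMem W l ∧ MMem W (l ++ List.ofFn fun m : Fin i => (v m, (0 : Y)))) :
    LBracketMem W
      (lamPerpX W.lam (AddSubgroup.closure (Set.range w)))
      (lamPerpY W.lam (AddSubgroup.closure (Set.range v)) ⊓
        qPerp W.qf (AddSubgroup.closure (Set.range w)))
      (AddSubgroup.closure (Set.range v))
      ((AddSubgroup.closure (Set.range v)).map
        ((AddCommGroup.torsion Y).subtype.comp ρ))
      (l.map (phiF W ρ v w)) := by
  obtain ⟨⟨hne, hnd, hLlam, hLq, hLa⟩, hM⟩ := h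
  have hvy := hvy_of_M W v l hM
  -- basic computations
  have hBy : ∀ j k : Fin l.length, W.lam (Bf W v w (l.get j).1) ((l.get k).2) = 0 := by
    intro j k
    rw [lam_Bf]
    exact Finset.sum_eq_zero fun m _ => by rw [hvy m k, mul_zero]
  have hac : ∀ j k : Fin l.length,
      W.lam ((l.get j).1 - Bf W v w (l.get j).1) ((l.get k).2 - Ef W ρ v w (l.get k).2)
        = if j = k then 1 else 0 := by
    intro j k
    have h1 : W.lam ((l.get j).1) (Ef W ρ v w (l.get k).2) = 0 := lam_Ef W ρ v w _ _
    have h3 : W.lam (Bf W v w (l.get j).1) (Ef W ρ v w (l.get k).2) = 0 := lam_Ef W ρ v w _ _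
    have h4 := hLlam j k
    have h2 := hBy j k
    simp only [map_sub, AddMonoidHom.sub_apply]
    rw [h1, h2, h3, h4]
    simp
  have hqE_y : ∀ j k : Fin l.length,
      W.qf (Ef W ρ v w (l.get j).2) ((l.get k).2) = 0 := fun j k =>
    q_Ef_of W ρ v w hρ _ _ (fun m => hvy m k)
  have hqEE : ∀ j k : Fin l.length,
      W.qf (Ef W ρ v w (l.get j).2) (Ef W ρ v w (l.get k).2) = 0 := fun j k =>
    WP_q_tor W (Ef_tor W ρ v w _) (Ef_tor W ρ v w _)
  have hq_cc : ∀ j k : Fin l.length,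
      W.qf ((l.get j).2 - Ef W ρ v w (l.get j).2) ((l.get k).2 - Ef W ρ v w (l.get k).2)
        = 0 := by
    intro j k
    have h2 : W.qf ((l.get j).2) (Ef W ρ v w (l.get k).2) = 0 := by
      rw [W.qf_symm]; exact hqE_y k j
    simp only [map_sub, AddMonoidHom.sub_apply]
    rw [hLq j k, hqE_y j k, h2, hqEE j k]
    simp
  have ha_c : ∀ j : Fin l.length,
      W.alpha ((l.get j).2 - Ef W ρ v w (l.get j).2) = 0 := by
    intro j
    have hq0 : W.qf ((l.get j).2) (-Ef W ρ v w (l.get j).2) = 0 := by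
      rw [WP_neg_tor (Ef_tor W ρ v w _), W.qf_symm]
      exact hqE_y j j
    rw [sub_eq_add_neg, W.alpha_add, hLa j, hq0]
    rw [WP_neg_tor (Ef_tor W ρ v w _), WP_alpha_tor W (Ef_tor W ρ v w _)]
    simp
  -- memberships
  have hmemA : ∀ j : Fin l.length,
      (l.get j).1 - Bf W v w (l.get j).1
        ∈ lamPerpX W.lam (AddSubgroup.closure (Set.range w)) := by
    intro j
    refine WP_mem_lamPerpX_of W _ _ ?_
    rintro s ⟨m, rfl⟩
    rw [map_sub, AddMonoidHom.sub_apply, lam_Bf]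
    rw [Finset.sum_congr rfl (fun m' _ => by rw [hlam m' m])]
    simp [mul_ite, Finset.sum_ite_eq']
  have hmemC : ∀ j : Fin l.length,
      (l.get j).2 - Ef W ρ v w (l.get j).2
        ∈ lamPerpY W.lam (AddSubgroup.closure (Set.range v)) ⊓
            qPerp W.qf (AddSubgroup.closure (Set.range w)) := by
    intro j
    rw [AddSubgroup.mem_inf]
    constructor
    · refine WP_mem_lamPerpY_of W _ _ ?_
      rintro s ⟨m, rfl⟩
      rw [map_sub, hvy m j, WP_lam_tor W _ (Ef_tor W ρ v w _), sub_zero]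
    · refine WP_mem_qPerp_of W _ _ ?_
      rintro s ⟨m, rfl⟩
      have hEw : W.qf (Ef W ρ v w (l.get j).2) (w m) = W.qf ((l.get j).2) (w m) := by
        rw [q_Ef W ρ v w hρ]
        rw [Finset.sum_congr rfl (fun m' _ => by rw [hlam m' m])]
        simp [apply_ite (fun z : ℤ => (z : ZMod 2)), smul_ite, Finset.sum_ite_eq',
          ZMod.natCast_val, ZMod.cast_id, nsmul_eq_mul, mul_one]
      rw [map_sub, AddMonoidHom.sub_apply, hEw, sub_self]
  have hmemB : ∀ j : Fin l.length,
      Bf W v w (l.get j).1 ∈ AddSubgroup.closure (Set.range v) := by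
    intro j
    rw [Bf_apply]
    exact AddSubgroup.sum_mem _ fun m _ =>
      AddSubgroup.zsmul_mem _ (AddSubgroup.subset_closure (Set.mem_range_self m)) _
  have hmemE : ∀ j : Fin l.length,
      Ef W ρ v w (l.get j).2 ∈ (AddSubgroup.closure (Set.range v)).map
        ((AddCommGroup.torsion Y).subtype.comp ρ) := by
    intro j
    refine ⟨∑ m, (W.qf ((l.get j).2) (w m)).val • v m,
      AddSubgroup.sum_mem _ (fun m _ =>
        AddSubgroup.nsmul_mem _ (AddSubgroup.subset_closure (Set.mem_range_self m)) _), ?_⟩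
    rw [map_sum, Ef_apply]
    simp [map_nsmul]
  -- index bookkeeping
  have hPlen : (l.map (phiF W ρ v w)).length = l.length := List.length_map _
  have hPget : ∀ j : Fin (l.map (phiF W ρ v w)).length,
      (l.map (phiF W ρ v w)).get j = phiF W ρ v w (l.get ⟨j, by omega⟩) := by
    intro j
    simp [List.get_eq_getElem, List.getElem_map]
  refine ⟨?_, ?_, ?_, ?_, ?_, ?_, ?_⟩
  · intro hP
    exact hne (by simpa using hP)
  · exact hnd.map (Function.LeftInverse.injective (psiF_phiF W ρ v w))
  · rw [List.nodup_iff_injective_get]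
    intro j k hjk
    have hj : ((j : ℕ)) < l.length := by
      have := j.isLt; simp at this; omega
    have hk : ((k : ℕ)) < l.length := by
      have := k.isLt; simp at this; omega
    have hgj : ((l.map (phiF W ρ v w)).map Prod.fst).get j
        = (phiF W ρ v w (l.get ⟨j, hj⟩)).1 := by
      simp [List.get_eq_getElem, List.getElem_map]
    have hgk : ((l.map (phiF W ρ v w)).map Prod.fst).get k
        = (phiF W ρ v w (l.get ⟨k, hk⟩)).1 := by
      simp [List.get_eq_getElem, List.getElem_map]
    rw [hgj, hgk] at hjk
    have hsnd := congrArg Prod.snd hjk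
    simp only [phiF] at hsnd
    have h1 : W.lam ((l.get ⟨j, hj⟩).1 - Bf W v w (l.get ⟨j, hj⟩).1)
        ((l.get ⟨j, hj⟩).2 - Ef W ρ v w (l.get ⟨j, hj⟩).2) = 1 := by
      rw [hac]; simp
    rw [hsnd] at h1
    rw [hac ⟨j, hj⟩ ⟨k, hk⟩] at h1
    by_cases hjkeq : (⟨j, hj⟩ : Fin l.length) = ⟨k, hk⟩
    · apply Fin.ext
      have := congrArg Fin.val hjkeq
      simpa using this
    · rw [if_neg hjkeq] at h1
      norm_num at h1
  · intro j
    rw [hPget j]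
    exact ⟨hmemA _, hmemC _, hmemB _, hmemE _⟩
  · intro j k
    rw [hPget j, hPget k]
    have := hac ⟨j, by omega⟩ ⟨k, by omega⟩
    simp only [phiF] at *
    rw [this]
    congr 1
    simp [Fin.ext_iff]
  · intro j k
    rw [hPget j, hPget k]
    exact hq_cc ⟨j, by omega⟩ ⟨k, by omega⟩
  · intro j
    rw [hPget j]
    exact ha_c ⟨j, by omega⟩

end Main

section Main2
variable {g : ℕ} {X Y A : Type} [AddCommGroup X] [AddCommGroup Y] [AddCommGroup A]
variable (W : WallPairing g X Y A) (ρ : X →+ AddCommGroup.torsion Y)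
variable {i : ℕ} (v : Fin i → X) (w : Fin i → Y)

lemma backward_mem (hρ : ∀ (x : X) (y : Y), W.qf (ρ x : Y) y = ((W.lam x y : ℤ) : ZMod 2))
    (hlam : ∀ l m, W.lam (v l) (w m) = if l = m then 1 else 0)
    (l : List ((X × Y) × (X × Y)))
    (hb : LBracketMem W
      (lamPerpX W.lam (AddSubgroup.closure (Set.range w)))
      (lamPerpY W.lam (AddSubgroup.closure (Set.range v)) ⊓
        qPerp W.qf (AddSubgroup.closure (Set.range w)))
      (AddSubgroup.closure (Set.range v))
      ((AddSubgroup.closure (Set.range v)).map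
        ((AddCommGroup.torsion Y).subtype.comp ρ)) l) :
    LMem W (l.map psiF) ∧
      MMem W (l.map psiF ++ List.ofFn fun m : Fin i => (v m, (0 : Y))) := by
  obtain ⟨hne, hnd, hndf, hmem, hlc, hqc, hac⟩ := hb
  -- extract memberships
  have hcV : ∀ k : Fin l.length,
      (l.get k).1.2 ∈ lamPerpY W.lam (AddSubgroup.closure (Set.range v)) :=
    fun k => (AddSubgroup.mem_inf.1 (hmem k).2.1).1
  have hcW : ∀ k : Fin l.length,
      (l.get k).1.2 ∈ qPerp W.qf (AddSubgroup.closure (Set.range w)) :=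
    fun k => (AddSubgroup.mem_inf.1 (hmem k).2.1).2
  have hEtor : ∀ j : Fin l.length, 2 • (l.get j).2.2 = 0 := by
    intro j
    obtain ⟨u, hu, hequ⟩ := (hmem j).2.2.2
    rw [← hequ]
    exact rho_tor W ρ u
  have hlam_e : ∀ (x : X) (j : Fin l.length), W.lam x ((l.get j).2.2) = 0 :=
    fun x j => WP_lam_tor W x (hEtor j)
  have hbc : ∀ j k : Fin l.length, W.lam ((l.get j).2.1) ((l.get k).1.2) = 0 :=
    fun j k => hcV k _ (hmem j).2.2.1
  have hq_ec : ∀ j k : Fin l.length, W.qf ((l.get j).2.2) ((l.get k).1.2) = 0 := by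
    intro j k
    obtain ⟨u, hu, hequ⟩ := (hmem j).2.2.2
    rw [← hequ]
    show W.qf (((AddCommGroup.torsion Y).subtype.comp ρ) u) _ = 0
    simp only [AddMonoidHom.comp_apply, AddSubgroup.coe_subtype]
    rw [hρ, hcV k u hu]
    simp
  have hq_ee : ∀ j k : Fin l.length, W.qf ((l.get j).2.2) ((l.get k).2.2) = 0 :=
    fun j k => WP_q_tor W (hEtor j) (hEtor k)
  have hq_ce : ∀ j k : Fin l.length, W.qf ((l.get j).1.2) ((l.get k).2.2) = 0 := by
    intro j k
    rw [W.qf_symm]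
    exact hq_ec k j
  -- the main computations
  have hlam_xy : ∀ j k : Fin l.length,
      W.lam ((l.get j).1.1 + (l.get j).2.1) ((l.get k).1.2 + (l.get k).2.2)
        = if j = k then 1 else 0 := by
    intro j k
    simp only [map_add, AddMonoidHom.add_apply]
    rw [hlc j k, hbc j k, hlam_e, hlam_e]
    simp
  have hq_yy : ∀ j k : Fin l.length,
      W.qf ((l.get j).1.2 + (l.get j).2.2) ((l.get k).1.2 + (l.get k).2.2) = 0 := by
    intro j k
    simp only [map_add, AddMonoidHom.add_apply]
    rw [hqc j k, hq_ce j k, hq_ec j k, hq_ee j k]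
    simp
  have ha_y : ∀ j : Fin l.length,
      W.alpha ((l.get j).1.2 + (l.get j).2.2) = 0 := by
    intro j
    rw [W.alpha_add, hac j, WP_alpha_tor W (hEtor j), hq_ce j j]
    simp
  -- index bookkeeping for the mapped list
  have hPlen : (l.map psiF).length = l.length := List.length_map _
  have hPget : ∀ j : Fin (l.map psiF).length,
      (l.map psiF).get j = psiF (l.get ⟨j, by omega⟩) := by
    intro j
    simp [List.get_eq_getElem, List.getElem_map]
  have hLM : LMem W (l.map psiF) := by
    refine ⟨?_, ?_, ?_, ?_, ?_⟩
    · intro hP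
      exact hne (by simpa using hP)
    · rw [List.nodup_iff_injective_get]
      intro j k hjk
      rw [hPget j, hPget k] at hjk
      have hsnd := congrArg Prod.snd hjk
      simp only [psiF] at hsnd
      have h1 := hlam_xy ⟨j, by omega⟩ ⟨j, by omega⟩
      rw [if_pos rfl] at h1
      rw [hsnd] at h1
      rw [hlam_xy ⟨j, by omega⟩ ⟨k, by omega⟩] at h1
      by_cases hjkeq : (⟨(j : ℕ), by omega⟩ : Fin l.length) = ⟨k, by omega⟩
      · exact Fin.ext (by simpa using congrArg Fin.val hjkeq)
      · rw [if_neg hjkeq] at h1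
        norm_num at h1
    · intro j k
      rw [hPget j, hPget k]
      have := hlam_xy ⟨j, by omega⟩ ⟨k, by omega⟩
      simp only [psiF] at *
      rw [this]
      congr 1
      simp [Fin.ext_iff]
    · intro j k
      rw [hPget j, hPget k]
      exact hq_yy ⟨j, by omega⟩ ⟨k, by omega⟩
    · intro j
      rw [hPget j]
      exact ha_y ⟨j, by omega⟩
  refine ⟨hLM, ?_⟩
  -- now the M conditions for the extended list
  have hLlen : (l.map psiF ++ List.ofFn fun m : Fin i => (v m, (0 : Y))).length = l.length + i := by simp
  have hget1 : ∀ (t : Fin (l.map psiF ++ List.ofFn fun m : Fin i => (v m, (0 : Y))).length) (h : (t : ℕ) < l.length),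
      (l.map psiF ++ List.ofFn fun m : Fin i => (v m, (0 : Y))).get t = psiF (l.get ⟨(t : ℕ), h⟩) := by
    intro t h
    have h1 : (l.map psiF ++ List.ofFn fun m : Fin i => (v m, (0 : Y))).get t = (l.map psiF ++ List.ofFn fun m : Fin i => (v m, (0 : Y)))[(t : ℕ)]'t.isLt := rfl
    rw [h1, List.getElem_append, dif_pos (by simpa using h)]
    simp [List.getElem_map]
  have hget2 : ∀ (t : Fin (l.map psiF ++ List.ofFn fun m : Fin i => (v m, (0 : Y))).length) (h : ¬ (t : ℕ) < l.length)
      (hm : (t : ℕ) - l.length < i),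
      (l.map psiF ++ List.ofFn fun m : Fin i => (v m, (0 : Y))).get t = (v ⟨(t : ℕ) - l.length, hm⟩, 0) := by
    intro t h hm
    have h1 : (l.map psiF ++ List.ofFn fun m : Fin i => (v m, (0 : Y))).get t = (l.map psiF ++ List.ofFn fun m : Fin i => (v m, (0 : Y)))[(t : ℕ)]'t.isLt := rfl
    rw [h1, List.getElem_append, dif_neg (by simpa using h), List.getElem_ofFn]
    show (v ⟨(t : ℕ) - (l.map psiF).length, by simpa using hm⟩, (0 : Y))
      = (v ⟨(t : ℕ) - l.length, hm⟩, (0 : Y))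
    have h2 : (⟨(t : ℕ) - (l.map psiF).length, by simpa using hm⟩ : Fin i)
        = ⟨(t : ℕ) - l.length, hm⟩ := Fin.ext (by simp)
    rw [h2]
  -- dual family
  set d : Fin (l.map psiF ++ List.ofFn fun m : Fin i => (v m, (0 : Y))).length → Y := fun t =>
    if h : (t : ℕ) < l.length then (l.get ⟨t, h⟩).1.2
    else w ⟨t - l.length, by have := t.isLt; simp at this; omega⟩
      - ∑ k : Fin l.length,
          W.lam ((l.get k).1.1 + (l.get k).2.1)
            (w ⟨t - l.length, by have := t.isLt; simp at this; omega⟩) • (l.get k).1.2 with hddef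
  have hlam_x_c : ∀ j k : Fin l.length,
      W.lam ((l.get j).1.1 + (l.get j).2.1) ((l.get k).1.2) = if j = k then 1 else 0 := by
    intro j k
    simp only [map_add, AddMonoidHom.add_apply]
    rw [hlc j k, hbc j k]
    simp
  have hlam_v_c : ∀ (m : Fin i) (k : Fin l.length), W.lam (v m) ((l.get k).1.2) = 0 :=
    fun m k => hcV k _ (AddSubgroup.subset_closure (Set.mem_range_self m))
  have hud : ∀ s t : Fin (l.map psiF ++ List.ofFn fun m : Fin i => (v m, (0 : Y))).length,
      W.lam (((l.map psiF ++ List.ofFn fun m : Fin i => (v m, (0 : Y))).get s).1) (d t) = if s = t then 1 else 0 := by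
    intro s t
    by_cases hs : (s : ℕ) < l.length
    · have hgs : (l.map psiF ++ List.ofFn fun m : Fin i => (v m, (0 : Y))).get s = psiF (l.get ⟨s, hs⟩) := hget1 s hs
      by_cases ht : (t : ℕ) < l.length
      · rw [hgs, hddef]
        simp only [dif_pos ht]
        have := hlam_x_c ⟨s, hs⟩ ⟨t, ht⟩
        simp only [psiF] at *
        rw [this]
        congr 1
        simp [Fin.ext_iff]
      · rw [hgs, hddef]
        simp only [dif_neg ht]
        rw [if_neg (by intro hcon; exact ht (by rw [← hcon] at *; exact hs))]
        simp only [psiF]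
        rw [map_sub, lam_sum_smul_right]
        rw [Finset.sum_congr rfl (fun k _ => by rw [hlam_x_c ⟨s, hs⟩ k])]
        simp [mul_ite, Finset.sum_ite_eq]
    · have hm : (s : ℕ) - l.length < i := by have := s.isLt; simp at this; omega
      have hgs : ((l.map psiF ++ List.ofFn fun m : Fin i => (v m, (0 : Y))).get s).1
          = v ⟨(s : ℕ) - l.length, hm⟩ := by
        rw [hget2 s hs hm]
      by_cases ht : (t : ℕ) < l.length
      · rw [hgs, hddef]
        simp only [dif_pos ht]
        rw [hlam_v_c, if_neg (by intro hcon; rw [hcon] at hs; exact hs ht)]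
      · rw [hgs, hddef]
        simp only [dif_neg ht]
        rw [map_sub, lam_sum_smul_right]
        rw [Finset.sum_congr rfl (fun k _ => by
          rw [hlam_v_c ⟨(s : ℕ) - l.length, hm⟩ k, mul_zero])]
        rw [hlam]
        simp only [Finset.sum_const_zero, sub_zero]
        have hsl := s.isLt
        have htl := t.isLt
        simp only [List.length_append, List.length_map, List.length_ofFn] at hsl htl
        by_cases hst : s = t
        · subst hst
          simp
        · rw [if_neg hst, if_neg]
          intro hcon
          apply hst
          apply Fin.ext
          have := congrArg Fin.val hcon
          simp at this
          omega
  obtain ⟨hindep, hcompl⟩ := WP_dual_pair W (fun t : Fin (l.map psiF ++ List.ofFn fun m : Fin i => (v m, (0 : Y))).length => ((l.map psiF ++ List.ofFn fun m : Fin i => (v m, (0 : Y))).get t).1) d hud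
  refine ⟨?_, ?_, hindep, hcompl, ?_, ?_, ?_⟩
  · intro hc
    rcases List.append_eq_nil_iff.1 hc with ⟨h1, _⟩
    exact hne (by simpa using h1)
  · rw [List.nodup_append]
    refine ⟨hLM.2.1, ?_, ?_⟩
    · rw [List.nodup_ofFn]
      intro m m' hmm
      have h1 : v m = v m' := congrArg Prod.fst hmm
      have h2 := hlam m' m
      rw [← h1, hlam m m] at h2
      simp at h2
      exact Fin.ext (by omega)
    · intro p hp p' hq hpp'
      subst hpp'
      obtain ⟨q', hq', rfl⟩ := List.mem_map.1 hp
      obtain ⟨jq, hjq⟩ := List.mem_iff_get.1 hq'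
      obtain ⟨m, hm⟩ := List.mem_ofFn.1 hq
      have h1 := hlam_xy jq jq
      rw [if_pos rfl] at h1
      have h2 : (psiF q').2 = 0 := by rw [← hm]
      rw [← hjq] at h2
      simp only [psiF] at h2
      rw [h2, map_zero] at h1
      norm_num at h1
  · intro t
    by_cases ht : (t : ℕ) < l.length
    · rw [hget1 t ht]
      exact ha_y ⟨t, ht⟩
    · have hm : (t : ℕ) - l.length < i := by have := t.isLt; simp at this; omega
      rw [hget2 t ht hm]
      exact WP_alpha_zero W
  · intro t
    by_cases ht : (t : ℕ) < l.length
    · right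
      intro j'
      rw [hget1 t ht]
      by_cases hj : (j' : ℕ) < l.length
      · rw [hget1 j' hj]
        have := hlam_xy ⟨j', hj⟩ ⟨t, ht⟩
        simp only [psiF] at *
        rw [this]
        congr 1
        simp [Fin.ext_iff]
      · have hm : (j' : ℕ) - l.length < i := by have := j'.isLt; simp at this; omega
        rw [hget2 j' hj hm]
        simp only [psiF]
        rw [map_add, hlam_v_c ⟨(j' : ℕ) - l.length, hm⟩ ⟨(t : ℕ), ht⟩,
          hlam_e, add_zero]
        rw [if_neg]
        intro hcon
        have h1 := congrArg Fin.val hcon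
        omega
    · left
      have hm : (t : ℕ) - l.length < i := by have := t.isLt; simp at this; omega
      rw [hget2 t ht hm]
  · intro s t
    by_cases hs : (s : ℕ) < l.length
    · rw [hget1 s hs]
      by_cases ht : (t : ℕ) < l.length
      · rw [hget1 t ht]
        exact hq_yy ⟨s, hs⟩ ⟨t, ht⟩
      · have hm : (t : ℕ) - l.length < i := by have := t.isLt; simp at this; omega
        rw [hget2 t ht hm]
        simp
    · have hm : (s : ℕ) - l.length < i := by have := s.isLt; simp at this; omega
      rw [hget2 s hs hm]
      simp

lemma FG_eq (hρ : ∀ (x : X) (y : Y), W.qf (ρ x : Y) y = ((W.lam x y : ℤ) : ZMod 2))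
    (hlam : ∀ l m, W.lam (v l) (w m) = if l = m then 1 else 0)
    (l : List ((X × Y) × (X × Y)))
    (hb : LBracketMem W
      (lamPerpX W.lam (AddSubgroup.closure (Set.range w)))
      (lamPerpY W.lam (AddSubgroup.closure (Set.range v)) ⊓
        qPerp W.qf (AddSubgroup.closure (Set.range w)))
      (AddSubgroup.closure (Set.range v))
      ((AddSubgroup.closure (Set.range v)).map
        ((AddCommGroup.torsion Y).subtype.comp ρ)) l) :
    (l.map psiF).map (phiF W ρ v w) = l := by
  obtain ⟨hne, hnd, hndf, hmem, hlc, hqc, hac⟩ := hb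
  rw [List.map_map]
  have h : ∀ p ∈ l, (phiF W ρ v w ∘ psiF) p = p := by
    intro p hp
    obtain ⟨j, hj⟩ := List.mem_iff_get.1 hp
    obtain ⟨hA, hC, hB, hE⟩ := hmem j
    rw [← hj]
    simp only [Function.comp_apply, psiF, phiF]
    have hBeq : Bf W v w ((l.get j).1.1 + (l.get j).2.1) = (l.get j).2.1 := by
      rw [map_add, Bf_on_perp W v w hA, Bf_on_V W v w hlam hB, zero_add]
    have hEeq : Ef W ρ v w ((l.get j).1.2 + (l.get j).2.2) = (l.get j).2.2 := by
      rw [map_add, Ef_on_perp W ρ v w (AddSubgroup.mem_inf.1 hC).2,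
        Ef_on_rhoV W ρ v w hρ hlam hE, zero_add]
    rw [hBeq, hEeq]
    simp
  rw [List.map_congr_left h]
  simp

end Main2

/-- With `v = ((v_1,0),…,(v_i,0))`, there is an order-isomorphism of posets
`L(X,Y) ∩ M(X,Y)_v ≅ L(W^⊥, V^⊥ ∩ Ŵ)⟨V × ρ(V)⟩`, obtained by decomposing each
`x_j = a_j + b_j` (`a_j ∈ W^⊥`, `b_j ∈ V`) and `y_j = c_j + e_j` (`c_j ∈ V^⊥ ∩ Ŵ`,
`e_j ∈ ρ(V)`); i.e. the inverse of the isomorphism is induced by the entrywise sum map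
`((a,c),(b,e)) ↦ (a + b, c + e)`. -/
theorem L_inter_M_res_orderIso (W : WallPairing g X Y A)
    (ρ : X →+ AddCommGroup.torsion Y)
    (hρ : ∀ (x : X) (y : Y), W.qf (ρ x : Y) y = ((W.lam x y : ℤ) : ZMod 2))
    (i : ℕ) (v : Fin i → X) (w : Fin i → Y)
    (hlam : ∀ l m, W.lam (v l) (w m) = if l = m then 1 else 0)
    (hq : ∀ l m, W.qf (w l) (w m) = 0) (halpha : ∀ l, W.alpha (w l) = 0) :
    ∃ e : ListPoset (fun l : List (X × Y) =>
            LMem W l ∧ MMem W (l ++ List.ofFn fun m : Fin i => (v m, (0 : Y)))) ≃o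
          ListPoset (LBracketMem W
            (lamPerpX W.lam (AddSubgroup.closure (Set.range w)))
            (lamPerpY W.lam (AddSubgroup.closure (Set.range v)) ⊓
              qPerp W.qf (AddSubgroup.closure (Set.range w)))
            (AddSubgroup.closure (Set.range v))
            ((AddSubgroup.closure (Set.range v)).map
              ((AddCommGroup.torsion Y).subtype.comp ρ))),
      ∀ u, ((e u).val.map fun p => (p.1.1 + p.2.1, p.1.2 + p.2.2)) = u.val := by
  refine ⟨⟨⟨fun u => ⟨u.val.map (phiF W ρ v w), forward_mem W ρ v w hρ hlam u.val u.2⟩,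
      fun u => ⟨u.val.map psiF, backward_mem W ρ v w hρ hlam u.val u.2⟩,
      fun u => Subtype.ext (GF_eq W ρ v w u.val),
      fun u => Subtype.ext (FG_eq W ρ v w hρ hlam u.val u.2)⟩,
      ?_⟩, fun u => GF_eq W ρ v w u.val⟩
  intro a b
  constructor
  · intro h
    have h2 : ((a.val.map (phiF W ρ v w)).map psiF).Sublist
        ((b.val.map (phiF W ρ v w)).map psiF) := List.Sublist.map _ h
    rwa [GF_eq, GF_eq] at h2
  · intro h
    exact List.Sublist.map _ h

end
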